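/- For the function r(x) = (1−x²)^{k+1}(1+x) and C_{k,k} = r^{(k)}(0), one has: if k is even, C_{k,k} = 2·(−1)^{k/2}(k+1)(k−1)!·binomial(k, k/2 − 1); if k is odd, C_{k,k} = (−1)^{(k−1)/2}·k!·binomial(k+1, (k−1)/2). -/

import Mathlib

open Polynomial

lemma iteratedDeriv_polyeval (p : ℝ[X]) (n : ℕ) :
    iteratedDeriv n (fun x => p.eval x) = fun x => (derivative^[n] p).eval x := by
  induction n generalizing p with
  | zero => simp
  | succ n ih =>
    rw [iteratedDeriv_succ', Function.iterate_succ_apply]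
    have h : deriv (fun x : ℝ => p.eval x) = fun x => p.derivative.eval x :=
      funext fun x => p.deriv
    rw [h, ih]

lemma coeff_one_sub_X_pow (n j : ℕ) :
    ((1 - X : ℝ[X]) ^ n).coeff j = (-1) ^ j * (n.choose j : ℝ) := by
  have h1 : (1 - X : ℝ[X]) = C (-1) * (X + C (-1)) := by
    rw [C_neg, C_1]; ring
  rw [h1, mul_pow, ← C_pow, coeff_C_mul, coeff_X_add_C_pow]
  rcases le_or_gt j n with hj | hj
  · have hs : (-1 : ℝ) ^ n * (-1) ^ (n - j) = (-1) ^ j := by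
      rw [← pow_add, show n + (n - j) = 2 * (n - j) + j by omega, pow_add, pow_mul,
        neg_one_sq, one_pow, one_mul]
    rw [← mul_assoc, hs]
  · simp [Nat.choose_eq_zero_of_lt hj]

lemma coeff_q (k n : ℕ) :
    ((1 - X ^ 2 : ℝ[X]) ^ (k + 1)).coeff n =
      if 2 ∣ n then (-1) ^ (n / 2) * ((k + 1).choose (n / 2) : ℝ) else 0 := by
  have h1 : (1 - X ^ 2 : ℝ[X]) ^ (k + 1) = expand ℝ 2 ((1 - X) ^ (k + 1)) := by
    rw [map_pow, map_sub, map_one, expand_X]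
  rw [h1, coeff_expand (by norm_num)]
  split <;> simp [coeff_one_sub_X_pow]

lemma fact_ne (n : ℕ) : ((n.factorial : ℝ)) ≠ 0 :=
  Nat.cast_ne_zero.mpr n.factorial_ne_zero

theorem Ckk_formula (k : ℕ) (hk : 2 ≤ k) :
    (Even k →
      iteratedDeriv k (fun x : ℝ => (1 - x ^ 2) ^ (k + 1) * (1 + x)) 0
        = 2 * (-1 : ℝ) ^ (k / 2) * (k + 1) * (k - 1).factorial
            * (k.choose (k / 2 - 1))) ∧
    (Odd k →
      iteratedDeriv k (fun x : ℝ => (1 - x ^ 2) ^ (k + 1) * (1 + x)) 0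
        = (-1 : ℝ) ^ ((k - 1) / 2) * k.factorial
            * ((k + 1).choose ((k - 1) / 2))) := by
  have hval : iteratedDeriv k (fun x : ℝ => (1 - x ^ 2) ^ (k + 1) * (1 + x)) 0
      = (k.factorial : ℝ) * ((1 - X ^ 2 : ℝ[X]) ^ (k + 1) * (1 + X)).coeff k := by
    have hfun : (fun x : ℝ => (1 - x ^ 2) ^ (k + 1) * (1 + x))
        = fun x => ((1 - X ^ 2 : ℝ[X]) ^ (k + 1) * (1 + X)).eval x := by
      funext x; simp
    rw [hfun, iteratedDeriv_polyeval]
    beta_reduce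
    rw [← coeff_zero_eq_eval_zero,
      coeff_iterate_derivative, zero_add, nsmul_eq_mul, Nat.descFactorial_self]
  have hmul : ∀ n : ℕ,
      ((1 - X ^ 2 : ℝ[X]) ^ (k + 1) * (1 + X)).coeff (n + 1)
        = ((1 - X ^ 2 : ℝ[X]) ^ (k + 1)).coeff (n + 1)
          + ((1 - X ^ 2 : ℝ[X]) ^ (k + 1)).coeff n := by
    intro n
    rw [mul_add, mul_one, coeff_add, coeff_mul_X]
  constructor
  · intro hke
    obtain ⟨t, ht⟩ : ∃ t, k = 2 * t + 2 := by
      obtain ⟨m, hm⟩ := hke; exact ⟨m - 1, by omega⟩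
    subst ht
    rw [hval, show 2 * t + 2 = (2 * t + 1) + 1 from rfl, hmul, coeff_q, coeff_q,
      if_pos (by omega), if_neg (by omega), add_zero]
    simp only [show (2 * t + 1 + 1) / 2 = t + 1 by omega,
      show (2 * t + 1 + 1) - 1 = 2 * t + 1 by omega,
      show t + 1 - 1 = t from rfl, show 2 * t + 1 + 1 + 1 = 2 * t + 3 from rfl]
    have hfact : (((2 * t + 2).factorial : ℝ)) * ((2 * t + 3).choose (t + 1) : ℝ)
        = 2 * (2 * t + 3) * ((2 * t + 1).factorial : ℝ) * ((2 * t + 2).choose t : ℝ) := by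
      have e1 : ((2 * t + 3).choose (t + 1) : ℝ)
          = ((2 * t + 3).factorial : ℝ)
            / (((t + 1).factorial : ℝ) * ((t + 2).factorial : ℝ)) := by
        rw [Nat.cast_choose ℝ (by omega), show 2 * t + 3 - (t + 1) = t + 2 by omega]
      have e2 : ((2 * t + 2).choose t : ℝ)
          = ((2 * t + 2).factorial : ℝ)
            / ((t.factorial : ℝ) * ((t + 2).factorial : ℝ)) := by
        rw [Nat.cast_choose ℝ (by omega), show 2 * t + 2 - t = t + 2 by omega]
      have f1 : ((2 * t + 3).factorial : ℝ)
          = (2 * t + 3) * ((2 * t + 2) * ((2 * t + 1).factorial : ℝ)) := by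
        rw [show 2 * t + 3 = (2 * t + 2) + 1 from rfl, Nat.factorial_succ,
          show 2 * t + 2 = (2 * t + 1) + 1 from rfl, Nat.factorial_succ]
        push_cast; ring
      have f2 : ((2 * t + 2).factorial : ℝ) = (2 * t + 2) * ((2 * t + 1).factorial : ℝ) := by
        rw [show 2 * t + 2 = (2 * t + 1) + 1 from rfl, Nat.factorial_succ]
        push_cast; ring
      have f3 : ((t + 1).factorial : ℝ) = (t + 1) * (t.factorial : ℝ) := by
        rw [Nat.factorial_succ]; push_cast; ring
      rw [e1, e2, f1, f3]
      rw [f2]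
      have h1 := fact_ne t
      have h2 := fact_ne (t + 2)
      have h3 : ((t : ℝ) + 1) ≠ 0 := by positivity
      field_simp
    push_cast at hfact ⊢
    linear_combination (-1 : ℝ) ^ (t + 1) * hfact
  · intro hko
    obtain ⟨t, ht⟩ := hko
    subst ht
    rw [hval, show 2 * t + 1 = (2 * t) + 1 from rfl, hmul, coeff_q, coeff_q,
      if_neg (by omega), if_pos (by omega), zero_add]
    simp only [show (2 * t) / 2 = t by omega, show (2 * t + 1) - 1 = 2 * t by omega,
      show 2 * t + 1 + 1 = 2 * t + 2 from rfl]
    ring
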